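/- Let K and G be groups and let S be a proper subgroup of K. In the restricted wreath product W = K ≀ G, the set H_S = {(f, 1_G) : f ∈ B(K,G), f(1_G) ∈ S} is a subgroup of W, and its normalizer is N_W(H_S) = {(f, 1_G) : f ∈ B(K,G), f(1_G) ∈ N_K(S)}. -/

import Mathlib

open scoped Classical

/-- The base group `B(K,G)` of the restricted wreath product: finitely supported
functions `G → K` under pointwise multiplication. -/
def baseGroup (K G : Type) [Group K] [Group G] : Subgroup (G → K) where
  carrier := {f | (Function.mulSupport f).Finite}
  one_mem' := by
    show (Function.mulSupport (1 : G → K)).Finite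
    exact Set.finite_empty.subset (fun x hx => (hx rfl).elim)
  mul_mem' := by
    intro f g hf hg
    show (Function.mulSupport (f * g)).Finite
    exact ((Set.Finite.union hf hg).subset (Function.mulSupport_mul f g))
  inv_mem' := by
    intro f hf
    show (Function.mulSupport (f⁻¹ : G → K)).Finite
    simpa [Function.mulSupport_inv] using hf

lemma mem_baseGroup_iff {K G : Type} [Group K] [Group G] (f : G → K) :
    f ∈ baseGroup K G ↔ (Function.mulSupport f).Finite := Iff.rfl

variable (K G : Type) [Group K] [Group G]

/-- Left-translation of a finitely supported function. -/
def shiftEquiv (g : G) : baseGroup K G ≃* baseGroup K G where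
  toFun f := ⟨fun x => (f : G → K) (g⁻¹ * x), by
    rw [mem_baseGroup_iff]
    have hf : (Function.mulSupport (f : G → K)).Finite := f.2
    refine (hf.image (fun y => g * y)).subset ?_
    intro x hx
    exact ⟨g⁻¹ * x, hx, by group⟩⟩
  invFun f := ⟨fun x => (f : G → K) (g * x), by
    rw [mem_baseGroup_iff]
    have hf : (Function.mulSupport (f : G → K)).Finite := f.2
    refine (hf.image (fun y => g⁻¹ * y)).subset ?_
    intro x hx
    exact ⟨g * x, hx, by group⟩⟩
  left_inv f := by
    ext x
    simp
  right_inv f := by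
    ext x
    simp
  map_mul' f₁ f₂ := by
    ext x
    rfl

/-- The left-translation action of `G` on `B(K,G)` as a homomorphism into automorphisms. -/
def shiftHom : G →* MulAut (baseGroup K G) where
  toFun := shiftEquiv K G
  map_one' := by
    ext f x
    simp [shiftEquiv]
  map_mul' g₁ g₂ := by
    ext f x
    simp [shiftEquiv, mul_assoc]

/-- The restricted wreath product `K ≀ G`. -/
abbrev wreath := (baseGroup K G) ⋊[shiftHom K G] G

/-- `ι(k) ∈ B(K,G)`: the function equal to `k` at `1` and `1` elsewhere. -/
noncomputable def iota (k : K) : baseGroup K G :=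
  ⟨fun x => if x = 1 then k else 1, by
    rw [mem_baseGroup_iff]
    refine (Set.finite_singleton (1 : G)).subset ?_
    intro x hx
    by_contra h
    exact hx (if_neg h)⟩


section Aux

@[simp] lemma shift_apply (K G : Type) [Group K] [Group G] (g : G) (f : baseGroup K G) (x : G) :
    ((shiftHom K G g f : baseGroup K G) : G → K) x = (f : G → K) (g⁻¹ * x) := rfl

/-- delta function: value `k` at `a`, `1` elsewhere. -/
noncomputable def deltaFn (K G : Type) [Group K] [Group G] (a : G) (k : K) : baseGroup K G :=
  ⟨fun x => if x = a then k else 1, by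
    rw [mem_baseGroup_iff]
    refine (Set.finite_singleton a).subset ?_
    intro x hx
    by_contra h
    exact hx (if_neg h)⟩

variable {K G : Type} [Group K] [Group G]

lemma conj_right (w h : wreath K G) :
    (w * h * w⁻¹).right = w.right * h.right * w.right⁻¹ := by
  simp [SemidirectProduct.mul_right, SemidirectProduct.inv_right]

lemma conj_left_one (w h : wreath K G) (hh : h.right = 1) :
    ((w * h * w⁻¹).left : G → K) 1 =
      (w.left : G → K) 1 * (h.left : G → K) (w.right⁻¹) * ((w.left : G → K) 1)⁻¹ := by
  simp [SemidirectProduct.mul_left, SemidirectProduct.mul_right,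
    SemidirectProduct.inv_left, SemidirectProduct.inv_right, hh]

/-- The subgroup `H_S`. -/
def HSdef (K G : Type) [Group K] [Group G] (S : Subgroup K) : Subgroup (wreath K G) where
  carrier := {w | w.right = 1 ∧ (w.left : G → K) 1 ∈ S}
  one_mem' := by
    refine ⟨rfl, ?_⟩
    simpa using S.one_mem
  mul_mem' := by
    rintro a b ⟨ha1, ha2⟩ ⟨hb1, hb2⟩
    refine ⟨by simp [SemidirectProduct.mul_right, ha1, hb1], ?_⟩
    have : ((a * b).left : G → K) 1 = (a.left : G → K) 1 * (b.left : G → K) 1 := by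
      simp [SemidirectProduct.mul_left, ha1]
    rw [this]
    exact S.mul_mem ha2 hb2
  inv_mem' := by
    rintro a ⟨ha1, ha2⟩
    refine ⟨by simp [SemidirectProduct.inv_right, ha1], ?_⟩
    have : ((a⁻¹).left : G → K) 1 = ((a.left : G → K) 1)⁻¹ := by
      simp [SemidirectProduct.inv_left, ha1]
    rw [this]
    exact S.inv_mem ha2

end Aux

/-- For a proper subgroup `S` of `K`, the set
`H_S = {(f, 1) : f ∈ B(K,G), f(1) ∈ S}` is a subgroup of `W = K ≀ G` whose normalizer
is `{(f, 1) : f ∈ B(K,G), f(1) ∈ N_K(S)}`. -/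
theorem normalizer_of_eval_subgroup (K G : Type) [Group K] [Group G]
    (S : Subgroup K) (hS : S ≠ ⊤) :
    ∃ HS : Subgroup (wreath K G),
      (HS : Set (wreath K G)) = {w | w.right = 1 ∧ (w.left : G → K) 1 ∈ S} ∧
      (Subgroup.normalizer (HS : Set (wreath K G)) : Set (wreath K G)) =
        {w | w.right = 1 ∧ (w.left : G → K) 1 ∈ Subgroup.normalizer (S : Set K)} := by
  obtain ⟨k, hk⟩ : ∃ k : K, k ∉ S := by
    by_contra h
    push_neg at h
    exact hS ((Subgroup.eq_top_iff' S).mpr h)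
  refine ⟨HSdef K G S, rfl, ?_⟩
  ext w
  simp only [SetLike.mem_coe, Subgroup.mem_normalizer_iff, Set.mem_setOf_eq]
  have memHS : ∀ u : wreath K G, u ∈ HSdef K G S ↔ u.right = 1 ∧ (u.left : G → K) 1 ∈ S :=
    fun u => Iff.rfl
  constructor
  · intro hw
    have hg : w.right = 1 := by
      by_contra hg
      set c : K := ((w.left : G → K) 1)⁻¹ * k * (w.left : G → K) 1 with hc
      set h : wreath K G := ⟨deltaFn K G (w.right⁻¹) c, 1⟩ with hdef
      have hmem : h ∈ HSdef K G S := by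
        refine ⟨rfl, ?_⟩
        have h1 : (1 : G) ≠ w.right⁻¹ := by
          intro he
          exact hg (by rw [← inv_inv w.right, ← he, inv_one])
        show (if (1 : G) = w.right⁻¹ then c else 1) ∈ S
        rw [if_neg h1]
        exact S.one_mem
      have hconj := ((hw h).mp hmem).2
      rw [conj_left_one w h rfl] at hconj
      have hval : (h.left : G → K) (w.right⁻¹) = c := by
        show (if w.right⁻¹ = w.right⁻¹ then c else 1) = c
        rw [if_pos rfl]
      rw [hval, hc] at hconj
      apply hk
      have : (w.left : G → K) 1 * (((w.left : G → K) 1)⁻¹ * k * (w.left : G → K) 1) *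
          ((w.left : G → K) 1)⁻¹ = k := by group
      rwa [this] at hconj
    refine ⟨hg, ?_⟩
    intro s
    have := hw ⟨iota K G s, 1⟩
    rw [memHS, memHS] at this
    have hl : ((⟨iota K G s, 1⟩ : wreath K G).left : G → K) 1 = s := by
      show (if (1 : G) = 1 then s else 1) = s
      rw [if_pos rfl]
    have hcr := conj_right w (⟨iota K G s, 1⟩ : wreath K G)
    have hcl := conj_left_one w (⟨iota K G s, 1⟩ : wreath K G) rfl
    rw [hg] at hcr hcl
    simp only [one_mul, mul_one, inv_one] at hcr hcl
    have hl2 : ((iota K G s : baseGroup K G) : G → K) 1 = s := by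
      show (if (1 : G) = 1 then s else 1) = s
      rw [if_pos rfl]
    rw [hl2] at hcl
    constructor
    · intro hs
      have := (this.mp ⟨rfl, by rwa [hl]⟩).2
      rwa [hcl] at this
    · intro hs
      have := (this.mpr ⟨by rw [hcr], by rw [hcl]; exact hs⟩).2
      rwa [hl] at this
  · rintro ⟨hg, hn⟩ h
    rw [memHS, memHS]
    have hcr := conj_right w h
    rw [hg] at hcr
    simp only [one_mul, mul_one, inv_one] at hcr
    constructor
    · rintro ⟨hh1, hh2⟩
      refine ⟨by rw [hcr, hh1], ?_⟩
      rw [conj_left_one w h hh1, hg, inv_one]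
      exact (hn ((h.left : G → K) 1)).mp hh2
    · rintro ⟨hh1, hh2⟩
      have hh1' : h.right = 1 := by rw [← hcr]; exact hh1
      refine ⟨hh1', ?_⟩
      rw [conj_left_one w h hh1', hg, inv_one] at hh2
      exact (hn ((h.left : G → K) 1)).mpr hh2
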